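/- Let G be a graph, let u, v be adjacent vertices of G, and let G_{u→v} be the Kelmans transformation of G from u to v. Then the circumference of G_{u→v} is at most the circumference of G, i.e., c(G_{u→v}) ≤ c(G). -/

import Mathlib

variable {V : Type*}

/-- `kelmansP G u v = P_v(u)`: the neighbors of `u` other than `v` that are
not neighbors of `v`. -/
def kelmansP (G : SimpleGraph V) (u v : V) : Set V :=
  {w | G.Adj u w ∧ w ≠ v ∧ ¬ G.Adj v w}

/-- The Kelmans transformation `G_{u→v}`: delete the edges from `u` to the
vertices of `P_v(u)` and add edges from `v` to the vertices of `P_v(u)`. -/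
def kelmans (G : SimpleGraph V) (u v : V) : SimpleGraph V where
  Adj x y :=
    (G.Adj x y ∧ ¬(x = u ∧ y ∈ kelmansP G u v) ∧ ¬(y = u ∧ x ∈ kelmansP G u v)) ∨
      (x = v ∧ y ∈ kelmansP G u v) ∨ (y = v ∧ x ∈ kelmansP G u v)
  symm := by
    constructor
    intro x y h
    rcases h with ⟨h1, h2, h3⟩ | h | h
    · exact Or.inl ⟨h1.symm, h3, h2⟩
    · exact Or.inr (Or.inr h)
    · exact Or.inr (Or.inl h)
  loopless := by
    constructor
    intro x h
    rcases h with ⟨h, -⟩ | ⟨rfl, -, h, -⟩ | ⟨rfl, -, h, -⟩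
    · exact G.irrefl h
    · exact h rfl
    · exact h rfl

/-- The circumference of a graph: the length of a longest cycle
(`0` if there is no cycle). -/
noncomputable def circumference (G : SimpleGraph V) : ℕ :=
  sSup {n | ∃ (u : V) (c : G.Walk u u), c.IsCycle ∧ c.length = n}

/-- The number of vertices of a longest path of `G`. -/
noncomputable def longestPathVerts (G : SimpleGraph V) : ℕ :=
  sSup {n | ∃ (u v : V) (p : G.Walk u v), p.IsPath ∧ p.length + 1 = n}

open SimpleGraph Walk

section Helpers

variable {G : SimpleGraph V} {u v : V}

lemma kelmans_adj {x y : V} : (kelmans G u v).Adj x y ↔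
    (G.Adj x y ∧ ¬(x = u ∧ y ∈ kelmansP G u v) ∧ ¬(y = u ∧ x ∈ kelmansP G u v)) ∨
      (x = v ∧ y ∈ kelmansP G u v) ∨ (y = v ∧ x ∈ kelmansP G u v) := Iff.rfl

lemma kelmansP_def {w : V} (h : w ∈ kelmansP G u v) :
    G.Adj u w ∧ w ≠ v ∧ ¬ G.Adj v w := h

lemma kel_adj_of_ne {x y : V} (h : (kelmans G u v).Adj x y) (hx : x ≠ v) (hy : y ≠ v) :
    G.Adj x y := by
  rcases kelmans_adj.mp h with ⟨h, -, -⟩ | ⟨rfl, -⟩ | ⟨rfl, -⟩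
  · exact h
  · exact absurd rfl hx
  · exact absurd rfl hy

lemma kel_adj_u {x : V} (hne : u ≠ v) (hx : x ≠ v) (h : (kelmans G u v).Adj x u) :
    G.Adj u x ∧ G.Adj v x := by
  rcases kelmans_adj.mp h with ⟨ha, -, h3⟩ | ⟨rfl, -⟩ | ⟨h', -⟩
  · have hxP : x ∉ kelmansP G u v := fun hP => h3 ⟨rfl, hP⟩
    refine ⟨ha.symm, ?_⟩
    by_contra hvx
    exact hxP ⟨ha.symm, hx, hvx⟩
  · exact absurd rfl hx
  · exact absurd h' hne

lemma kel_edges_sub {a b : V} (q : (kelmans G u v).Walk a b) (hv : v ∉ q.support) :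
    ∀ e ∈ q.edges, e ∈ G.edgeSet := by
  intro e he
  induction e using Sym2.ind with
  | _ x y =>
    have hadj := q.adj_of_mem_edges he
    have hx : x ≠ v := fun h => hv (h ▸ q.fst_mem_support_of_mem_edges he)
    have hy : y ≠ v := fun h => hv (h ▸ q.snd_mem_support_of_mem_edges he)
    exact kel_adj_of_ne hadj hx hy

end Helpers

section Main

variable {G : SimpleGraph V} {u v : V}

lemma not_mem_edges_left {x y a b : V} {p : G.Walk a b} (h : x ∉ p.support) :
    s(x, y) ∉ p.edges := fun he => h (p.fst_mem_support_of_mem_edges he)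

lemma kelmans_oneNew (huv : G.Adj u v) {w1 w2 : V} (hw2 : w2 ∈ kelmansP G u v)
    (hw1 : G.Adj v w1) (q : (kelmans G u v).Walk w2 w1) (hq : q.IsPath)
    (hv : v ∉ q.support) :
    ∃ (b : V) (d : G.Walk b b), d.IsCycle ∧ q.length + 2 ≤ d.length := by
  classical
  obtain ⟨hw2a, hw2v, hw2nv⟩ := kelmansP_def hw2
  by_cases hu : u ∈ q.support
  · by_cases hu1 : u = w1
    · -- u = w1 : q ends at u
      rcases hu1 with rfl
      have hnn : ¬ q.Nil := Walk.not_nil_of_ne hw2a.ne'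
      obtain ⟨y, hy, q0, rfl⟩ := (Walk.not_nil_iff).mp hnn
      obtain ⟨x, r, hxu, hqe⟩ := Walk.exists_cons_eq_concat hy q0
      rw [hqe] at hq hv ⊢
      have hsup : (r.concat hxu).support = r.support ++ [u] := by
        simp [Walk.support_concat]
      rw [Walk.isPath_def, hsup] at hq
      rw [hsup] at hv
      rw [List.nodup_append'] at hq
      simp only [List.mem_append, List.mem_singleton, not_or] at hv
      have hur : u ∉ r.support := fun hh => hq.2.2 hh (by simp)
      have hvr : v ∉ r.support := hv.1
      have hvu : v ≠ u := hv.2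
      have hxv : x ≠ v := fun h => hvr (h ▸ r.end_mem_support)
      obtain ⟨hux, hvx⟩ := kel_adj_u huv.ne hxv hxu
      have hr : ∀ e ∈ r.edges, e ∈ G.edgeSet := kel_edges_sub r hvr
      refine ⟨v, Walk.cons huv.symm
        (Walk.cons hw2a ((r.transfer G hr).concat hvx.symm)), ?_, ?_⟩
      · rw [Walk.cons_isCycle_iff]
        constructor
        · rw [Walk.isPath_def]
          simp only [Walk.support_cons, Walk.support_concat, Walk.support_transfer,
            List.concat_eq_append, List.nodup_cons, List.nodup_append', List.mem_append,
            List.mem_singleton, not_or]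
          refine ⟨⟨hur, huv.ne⟩, hq.1, by simp, fun a ha hav => ?_⟩
          rw [List.mem_singleton] at hav
          exact hvr (hav ▸ ha)
        · -- s(v,u) not an edge of the path
          simp only [Walk.edges_cons, Walk.edges_concat, Walk.edges_transfer,
            List.concat_eq_append, List.mem_cons, List.mem_append, List.mem_singleton]
          push_neg
          refine ⟨?_, not_mem_edges_left hvr, ?_, by simp⟩
          · intro h
            rw [Sym2.eq_iff] at h
            rcases h with ⟨h1, -⟩ | ⟨h1, -⟩
            · exact hvu h1
            · exact hw2v h1.symm
          · intro h
            rw [Sym2.eq_iff] at h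
            rcases h with ⟨-, h2⟩ | ⟨-, h2⟩
            · exact huv.ne h2
            · exact hur (h2 ▸ r.end_mem_support)
      · simp only [Walk.length_cons, Walk.length_concat, Walk.length_transfer]
        omega
    · -- u in the interior of q
      have hq1n : ¬ (q.takeUntil u hu).Nil := Walk.not_nil_of_ne hw2a.ne'
      obtain ⟨y, hy, q10, hq1e⟩ := Walk.not_nil_iff.mp hq1n
      obtain ⟨x1, r1, hx1u, hq1c⟩ := Walk.exists_cons_eq_concat hy q10
      have hq1 : q.takeUntil u hu = r1.concat hx1u := hq1e.trans hq1c
      have hq2n : ¬ (q.dropUntil u hu).Nil := Walk.not_nil_of_ne hu1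
      obtain ⟨x2, hx2, r2, hq2⟩ := Walk.not_nil_iff.mp hq2n
      have hspec := q.take_spec hu
      rw [hq1, hq2] at hspec
      rw [← hspec] at hq hv ⊢
      rw [Walk.isPath_def] at hq
      simp only [Walk.support_append, Walk.support_concat, Walk.support_cons,
        List.concat_eq_append, List.tail_cons, List.nodup_append', List.mem_append,
        List.mem_singleton, not_or] at hq hv
      have hr1 : r1.support.Nodup := hq.1.1
      have hur1 : u ∉ r1.support := fun hh => hq.1.2.2 hh (by simp)
      have hr2 : r2.support.Nodup := hq.2.1
      have hdisj : (r1.support ++ [u]).Disjoint r2.support := hq.2.2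
      have hur2 : u ∉ r2.support := fun hh => hdisj (by simp) hh
      have hd12 : ∀ a ∈ r1.support, a ∉ r2.support := fun a ha => hdisj (by simp [ha])
      have hv1 : v ∉ r1.support := hv.1.1
      have hvu : v ≠ u := hv.1.2
      have hv2 : v ∉ r2.support := hv.2
      have hx1v : x1 ≠ v := fun h => hv1 (h ▸ r1.end_mem_support)
      have hx2v : x2 ≠ v := fun h => hv2 (h ▸ r2.start_mem_support)
      obtain ⟨hux1, hvx1⟩ := kel_adj_u huv.ne hx1v hx1u
      obtain ⟨hux2, hvx2⟩ := kel_adj_u huv.ne hx2v hx2.symm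
      have hre1 := kel_edges_sub r1 hv1
      have hre2 := kel_edges_sub r2 hv2
      refine ⟨v, Walk.cons hvx1 (((r1.transfer G hre1).reverse).append
        (Walk.cons hw2a.symm (Walk.cons hux2
          ((r2.transfer G hre2).concat hw1.symm)))), ?_, ?_⟩
      · rw [Walk.cons_isCycle_iff]
        constructor
        · rw [Walk.isPath_def]
          simp only [Walk.support_append, Walk.support_reverse, Walk.support_transfer,
            Walk.support_cons, Walk.support_concat, List.concat_eq_append, List.tail_cons,
            List.nodup_append', List.nodup_reverse, List.mem_reverse, List.mem_cons,
            List.mem_append, List.mem_singleton, not_or]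
          refine ⟨hr1, ?_, ?_⟩
          · rw [List.nodup_cons]
            constructor
            · simp only [List.mem_append, List.mem_singleton]
              push_neg
              exact ⟨hur2, huv.ne⟩
            · rw [List.nodup_append']
              refine ⟨hr2, by simp, fun a ha hav => ?_⟩
              rw [List.mem_singleton] at hav
              exact hv2 (hav ▸ ha)
          · intro a ha hav
            rw [List.mem_reverse] at ha
            rcases List.mem_cons.mp hav with rfl | h
            · exact hur1 ha
            · rcases List.mem_append.mp h with h | h
              · exact hd12 a ha h
              · rw [List.mem_singleton] at h
                exact hv1 (h ▸ ha)
        · simp only [Walk.edges_append, Walk.edges_reverse, Walk.edges_transfer,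
            Walk.edges_cons, Walk.edges_concat, List.concat_eq_append, List.mem_append,
            List.mem_reverse, List.mem_cons, List.mem_singleton]
          push_neg
          refine ⟨not_mem_edges_left hv1, ?_, ?_, not_mem_edges_left hv2, ?_, by simp⟩ <;>
            intro h <;> rw [Sym2.eq_iff] at h
          · rcases h with ⟨h1, -⟩ | ⟨h1, -⟩
            · exact hw2v h1.symm
            · exact hvu h1
          · rcases h with ⟨h1, -⟩ | ⟨h1, -⟩
            · exact hvu h1
            · exact hx2v h1.symm
          · rcases h with ⟨-, h2⟩ | ⟨-, h2⟩
            · exact hx1v h2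
            · exact hd12 x1 r1.end_mem_support (h2 ▸ r2.end_mem_support)
      · simp only [Walk.length_cons, Walk.length_append, Walk.length_reverse,
          Walk.length_concat, Walk.length_transfer]
        omega
  · -- u not on q : insert u between v and w2
    have huw1 : u ≠ w1 := fun h => hu (h ▸ q.end_mem_support)
    have hr : ∀ e ∈ q.edges, e ∈ G.edgeSet := kel_edges_sub q hv
    refine ⟨v, Walk.cons huv.symm
      ((Walk.cons hw2a (q.transfer G hr)).concat hw1.symm), ?_, ?_⟩
    · rw [Walk.cons_isCycle_iff]
      constructor
      · rw [Walk.isPath_def]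
        simp only [Walk.support_concat, Walk.support_cons, Walk.support_transfer,
          List.concat_eq_append, List.nodup_append', List.nodup_cons, List.mem_cons,
          List.mem_singleton, not_or]
        refine ⟨⟨hu, (Walk.isPath_def _).mp hq⟩, by simp, fun a ha hav => ?_⟩
        rw [List.mem_singleton] at hav
        subst hav
        rcases List.mem_cons.mp ha with h1 | h1
        · exact huv.ne h1.symm
        · exact hv h1
      · simp only [Walk.edges_concat, Walk.edges_cons, Walk.edges_transfer,
          List.concat_eq_append, List.mem_append, List.mem_cons, List.mem_singleton]
        push_neg
        refine ⟨⟨?_, not_mem_edges_left hv⟩, ?_, by simp⟩ <;> intro h <;>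
          rw [Sym2.eq_iff] at h
        · rcases h with ⟨h1, -⟩ | ⟨h1, -⟩
          · exact huv.ne h1.symm
          · exact hw2v h1.symm
        · rcases h with ⟨-, h2⟩ | ⟨-, h2⟩
          · exact huv.ne h2
          · exact huw1 h2
    · simp [Walk.length_concat, Walk.length_transfer]

lemma kelmans_twoNew (huv : G.Adj u v) {w1 w2 : V} (hw2 : w2 ∈ kelmansP G u v)
    (hw1 : w1 ∈ kelmansP G u v) (q : (kelmans G u v).Walk w2 w1) (hq : q.IsPath)
    (hv : v ∉ q.support) (hlen : 1 ≤ q.length) :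
    ∃ (b : V) (d : G.Walk b b), d.IsCycle ∧ q.length + 2 ≤ d.length := by
  classical
  obtain ⟨hw2a, hw2v, hw2nv⟩ := kelmansP_def hw2
  obtain ⟨hw1a, hw1v, hw1nv⟩ := kelmansP_def hw1
  have hne21 : w2 ≠ w1 := by
    intro h
    subst h
    rw [Walk.isPath_iff_eq_nil] at hq
    subst hq
    simp at hlen
  by_cases hu : u ∈ q.support
  · -- u inside q : swap the roles of u and v
    have hq1n : ¬ (q.takeUntil u hu).Nil := Walk.not_nil_of_ne hw2a.ne'
    obtain ⟨y, hy, q10, hq1e⟩ := Walk.not_nil_iff.mp hq1n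
    obtain ⟨x1, r1, hx1u, hq1c⟩ := Walk.exists_cons_eq_concat hy q10
    have hq1 : q.takeUntil u hu = r1.concat hx1u := hq1e.trans hq1c
    have hq2n : ¬ (q.dropUntil u hu).Nil := Walk.not_nil_of_ne hw1a.ne
    obtain ⟨x2, hx2, r2, hq2⟩ := Walk.not_nil_iff.mp hq2n
    have hspec := q.take_spec hu
    rw [hq1, hq2] at hspec
    rw [← hspec] at hq hv ⊢
    rw [Walk.isPath_def] at hq
    simp only [Walk.support_append, Walk.support_concat, Walk.support_cons,
      List.concat_eq_append, List.tail_cons, List.nodup_append', List.mem_append,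
      List.mem_singleton, not_or] at hq hv
    have hr1 : r1.support.Nodup := hq.1.1
    have hur1 : u ∉ r1.support := fun hh => hq.1.2.2 hh (by simp)
    have hr2 : r2.support.Nodup := hq.2.1
    have hdisj : (r1.support ++ [u]).Disjoint r2.support := hq.2.2
    have hur2 : u ∉ r2.support := fun hh => hdisj (by simp) hh
    have hd12 : ∀ a ∈ r1.support, a ∉ r2.support := fun a ha => hdisj (by simp [ha])
    have hv1 : v ∉ r1.support := hv.1.1
    have hvu : v ≠ u := hv.1.2
    have hv2 : v ∉ r2.support := hv.2
    have hx1v : x1 ≠ v := fun h => hv1 (h ▸ r1.end_mem_support)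
    have hx2v : x2 ≠ v := fun h => hv2 (h ▸ r2.start_mem_support)
    obtain ⟨hux1, hvx1⟩ := kel_adj_u huv.ne hx1v hx1u
    obtain ⟨hux2, hvx2⟩ := kel_adj_u huv.ne hx2v hx2.symm
    have hre1 := kel_edges_sub r1 hv1
    have hre2 := kel_edges_sub r2 hv2
    refine ⟨u, Walk.cons hw2a (((r1.transfer G hre1).concat hvx1.symm).append
      (Walk.cons hvx2 ((r2.transfer G hre2).concat hw1a.symm))), ?_, ?_⟩
    · rw [Walk.cons_isCycle_iff]
      constructor
      · rw [Walk.isPath_def]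
        simp only [Walk.support_append, Walk.support_transfer, Walk.support_cons,
          Walk.support_concat, List.concat_eq_append, List.tail_cons, List.nodup_append',
          List.nodup_cons, List.mem_cons, List.mem_append, List.mem_singleton, not_or]
        refine ⟨⟨hr1, by simp, fun a ha hav => ?_⟩, ⟨hr2, by simp, fun a ha hav => ?_⟩,
          fun a ha hav => ?_⟩
        · rw [List.mem_singleton] at hav
          exact hv1 (hav ▸ ha)
        · rw [List.mem_singleton] at hav
          exact hur2 (hav ▸ ha)
        · rcases List.mem_append.mp ha with h1 | h1
          · rcases List.mem_append.mp hav with h2 | h2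
            · exact hd12 a h1 h2
            · rw [List.mem_singleton] at h2
              exact hur1 (h2 ▸ h1)
          · rw [List.mem_singleton] at h1
            subst h1
            rcases List.mem_append.mp hav with h2 | h2
            · exact hv2 h2
            · rw [List.mem_singleton] at h2
              exact hvu h2
      · simp only [Walk.edges_append, Walk.edges_transfer, Walk.edges_cons,
          Walk.edges_concat, List.concat_eq_append, List.mem_append, List.mem_cons,
          List.mem_singleton]
        push_neg
        refine ⟨⟨not_mem_edges_left hur1, ?_, by simp⟩, ?_, not_mem_edges_left hur2,
          ?_, by simp⟩ <;> intro h <;> rw [Sym2.eq_iff] at h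
        · rcases h with ⟨h1, -⟩ | ⟨h1, -⟩
          · exact hur1 (h1.symm ▸ r1.end_mem_support)
          · exact huv.ne h1
        · rcases h with ⟨h1, -⟩ | ⟨h1, -⟩
          · exact huv.ne h1
          · exact hur2 (h1.symm ▸ r2.start_mem_support)
        · rcases h with ⟨h1, -⟩ | ⟨-, h2⟩
          · exact hw1a.ne h1
          · exact hne21 h2
    · simp only [Walk.length_cons, Walk.length_append, Walk.length_concat,
        Walk.length_transfer]
      omega
  · -- u not on q : route through u instead of v
    have hr := kel_edges_sub q hv
    refine ⟨u, Walk.cons hw2a ((q.transfer G hr).concat hw1a.symm), ?_, ?_⟩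
    · rw [Walk.cons_isCycle_iff]
      constructor
      · rw [Walk.isPath_def]
        simp only [Walk.support_concat, Walk.support_transfer, List.concat_eq_append,
          List.nodup_append', List.mem_singleton, not_or]
        refine ⟨(Walk.isPath_def _).mp hq, by simp, fun a ha hav => ?_⟩
        rw [List.mem_singleton] at hav
        exact hu (hav ▸ ha)
      · simp only [Walk.edges_concat, Walk.edges_transfer, List.concat_eq_append,
          List.mem_append, List.mem_singleton]
        push_neg
        refine ⟨not_mem_edges_left hu, ?_⟩
        intro h
        rw [Sym2.eq_iff] at h
        rcases h with ⟨h1, -⟩ | ⟨-, h2⟩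
        · exact hw1a.ne h1
        · exact hne21 h2
    · simp only [Walk.length_cons, Walk.length_concat, Walk.length_transfer]
      omega

lemma kel_adj_v {w : V} (h : (kelmans G u v).Adj v w) :
    G.Adj v w ∨ w ∈ kelmansP G u v := by
  rcases kelmans_adj.mp h with ⟨ha, -, -⟩ | ⟨-, hP⟩ | ⟨hwv, -⟩
  · exact Or.inl ha
  · exact Or.inr hP
  · exact absurd hwv h.ne'

lemma kelmans_cycle_decomp (huv : G.Adj u v) {w1 w2 : V}
    (h1 : (kelmans G u v).Adj v w2) (h2 : (kelmans G u v).Adj w1 v)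
    (q : (kelmans G u v).Walk w2 w1)
    (hc : (Walk.cons h1 (q.concat h2)).IsCycle) :
    ∃ (b : V) (d : G.Walk b b), d.IsCycle ∧ q.length + 2 ≤ d.length := by
  obtain ⟨hp, hel⟩ := (Walk.cons_isCycle_iff _ _).mp hc
  rw [Walk.isPath_def, Walk.support_concat,
    List.nodup_append'] at hp
  have hq : q.IsPath := (Walk.isPath_def _).mpr hp.1
  have hv : v ∉ q.support := fun hh => hp.2.2 hh (by simp)
  have hlen : 1 ≤ q.length := by
    have h3 := hc.three_le_length
    simp only [Walk.length_cons, Walk.length_concat] at h3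
    omega
  rcases kel_adj_v h1 with ho2 | hn2 <;> rcases kel_adj_v h2.symm with ho1 | hn1
  · -- both edges at v are edges of G : transfer the whole cycle
    have hall : ∀ e ∈ (Walk.cons h1 (q.concat h2)).edges, e ∈ G.edgeSet := by
      intro e he
      simp only [Walk.edges_cons, Walk.edges_concat, List.concat_eq_append,
        List.mem_cons, List.mem_append, List.mem_singleton] at he
      rcases he with rfl | he | rfl | h0
      · exact G.mem_edgeSet.mpr ho2
      · exact kel_edges_sub q hv e he
      · exact G.mem_edgeSet.mpr ho1.symm
      · simp at h0
    refine ⟨v, _, hc.transfer hall, ?_⟩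
    rw [Walk.length_transfer]
    simp [Walk.length_concat]
  · -- edge at w2 old, edge at w1 new : reverse and use one-new construction
    obtain ⟨b, d, hd, hld⟩ := kelmans_oneNew huv hn1 ho2 q.reverse hq.reverse
      (by rwa [Walk.support_reverse, List.mem_reverse])
    exact ⟨b, d, hd, by rwa [Walk.length_reverse] at hld⟩
  · exact kelmans_oneNew huv hn2 ho1 q hq hv
  · exact kelmans_twoNew huv hn2 hn1 q hq hv hlen

lemma kelmans_cycle (huv : G.Adj u v) {a : V} (c : (kelmans G u v).Walk a a)
    (hc : c.IsCycle) :
    ∃ (b : V) (d : G.Walk b b), d.IsCycle ∧ c.length ≤ d.length := by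
  classical
  by_cases hv : v ∈ c.support
  · have hc1 : (c.rotate v hv).IsCycle := hc.rotate hv
    have hlen : (c.rotate v hv).length = c.length := by
      rw [← Walk.length_edges, ← Walk.length_edges]
      exact (c.rotate_edges v hv).perm.length_eq
    have hnn : ¬ (c.rotate v hv).Nil := hc1.not_nil
    obtain ⟨w2, h1, p1, hp1⟩ := Walk.not_nil_iff.mp hnn
    have hnn2 : ¬ p1.Nil := by
      rw [Walk.nil_iff_length_eq]
      intro h0
      have h3 := hc1.three_le_length
      rw [hp1] at h3
      simp [h0] at h3
    obtain ⟨y, hy, q0, hp1e⟩ := Walk.not_nil_iff.mp hnn2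
    obtain ⟨w1, q, h2, hqc⟩ := Walk.exists_cons_eq_concat hy q0
    have hp1' : p1 = q.concat h2 := hp1e.trans hqc
    rw [hp1'] at hp1
    rw [hp1] at hc1 hlen
    obtain ⟨b, d, hd, hld⟩ := kelmans_cycle_decomp huv h1 h2 q hc1
    refine ⟨b, d, hd, ?_⟩
    simp only [Walk.length_cons, Walk.length_concat] at hlen
    omega
  · exact ⟨a, c.transfer G (kel_edges_sub c hv), hc.transfer _,
      by rw [Walk.length_transfer]⟩

end Main

theorem circumference_kelmans_le {V : Type*} [Fintype V] (G : SimpleGraph V)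
    (u v : V) (huv : G.Adj u v) :
    circumference (kelmans G u v) ≤ circumference G := by
  unfold circumference
  apply csSup_le'
  rintro n ⟨a, c, hc, rfl⟩
  have hbdd : BddAbove {n | ∃ (x : V) (w : G.Walk x x), w.IsCycle ∧ w.length = n} := by
    refine ⟨Fintype.card V, ?_⟩
    rintro m ⟨x, w, hw, rfl⟩
    have h1 : w.support.tail.length ≤ Fintype.card V := hw.support_nodup.length_le_card
    have h2 := w.length_support
    have h3 : w.support.tail.length = w.support.length - 1 := by simp [List.length_tail]
    omega
  obtain ⟨b, d, hd, hld⟩ := kelmans_cycle huv c hc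
  exact hld.trans (le_csSup hbdd ⟨b, d, hd, rfl⟩)
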